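/- Let R be a finite ring, n ≥ 1 and 1 ≤ k ≤ n integers, and let 𝒞 be the set of all free rank-k R-submodules of R^n. Then 𝒞 is balanced: there exists an integer L such that every vector y ∈ (R^n)* is contained in exactly L members of 𝒞. -/

import Mathlib

noncomputable section

namespace BalancedAux

variable {R : Type*} [Ring R] {n : ℕ}

/-- The shear map `x ↦ x + x j • v`. -/
def shear (v : Fin n → R) (j : Fin n) : (Fin n → R) →ₗ[R] (Fin n → R) where
  toFun x := x + x j • v
  map_add' x y := by
    simp only [Pi.add_apply, add_smul]
    abel
  map_smul' r x := by
    simp only [Pi.smul_apply, smul_eq_mul, RingHom.id_apply, smul_add, mul_smul]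

lemma shear_apply (v : Fin n → R) (j : Fin n) (x : Fin n → R) :
    shear v j x = x + x j • v := rfl

lemma shear_comp (v w : Fin n → R) (j : Fin n) :
    (shear v j).comp (shear w j) = shear (w + (1 + w j) • v) j := by
  ext x i
  simp only [LinearMap.comp_apply, shear_apply, Pi.add_apply, Pi.smul_apply, smul_eq_mul]
  noncomm_ring

lemma shear_zero (j : Fin n) : shear (0 : Fin n → R) j = LinearMap.id := by
  ext x i
  simp [shear_apply]

/-- The shear as a linear equivalence, given a unit coordinate. -/
def shearEquiv (y : Fin n → R) (j : Fin n) (hu : IsUnit (y j)) :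
    (Fin n → R) ≃ₗ[R] (Fin n → R) := by
  set c : R := ((hu.unit⁻¹ : Rˣ) : R) with hc
  set v : Fin n → R := y - Pi.single j 1 with hv
  set w : Fin n → R := -(c • v) with hw
  have hc1 : c * y j = 1 := hu.val_inv_mul
  have hc2 : y j * c = 1 := hu.mul_val_inv
  have hvj : v j = y j - 1 := by simp [hv]
  have hwj : w j = c - 1 := by
    simp only [hw, Pi.neg_apply, Pi.smul_apply, smul_eq_mul, hvj, mul_sub, hc1, mul_one]
    noncomm_ring
  refine LinearEquiv.ofLinear (shear v j) (shear w j) ?_ ?_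
  · rw [shear_comp]
    have : w + (1 + w j) • v = 0 := by
      rw [hwj]
      have h1 : (1 : R) + (c - 1) = c := by abel
      rw [h1, hw]
      simp
    rw [this, shear_zero]
  · rw [shear_comp]
    have : v + (1 + v j) • w = 0 := by
      rw [hvj]
      have h1 : (1 : R) + (y j - 1) = y j := by abel
      rw [h1, hw, smul_neg, smul_smul, hc2, one_smul]
      simp
    rw [this, shear_zero]

lemma shearEquiv_single (y : Fin n → R) (j : Fin n) (hu : IsUnit (y j)) :
    shearEquiv y j hu (Pi.single j 1) = y := by
  show shear (y - Pi.single j 1) j (Pi.single j 1) = y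
  rw [shear_apply, Pi.single_eq_same, one_smul]
  abel

/-- Counting free rank-k submodules containing a vector is invariant under automorphisms. -/
lemma card_eq (k : ℕ) (g : (Fin n → R) ≃ₗ[R] (Fin n → R)) (y₀ y : Fin n → R)
    (hg : g y₀ = y) :
    Nat.card {C : Submodule R (Fin n → R) // Nonempty (C ≃ₗ[R] (Fin k → R)) ∧ y ∈ C}
      = Nat.card {C : Submodule R (Fin n → R) // Nonempty (C ≃ₗ[R] (Fin k → R)) ∧ y₀ ∈ C} := by
  apply Nat.card_congr
  refine Equiv.subtypeEquiv (Submodule.orderIsoMapComap g.symm).toEquiv fun C => ?_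
  have hmap : (Submodule.orderIsoMapComap g.symm).toEquiv C = C.map (g.symm : (Fin n → R) →ₗ[R] (Fin n → R)) := rfl
  rw [hmap]
  constructor
  · rintro ⟨⟨e⟩, hyC⟩
    refine ⟨⟨(g.symm.submoduleMap C).symm.trans e⟩, ?_⟩
    exact Submodule.mem_map.2 ⟨y, hyC, by rw [← hg, LinearEquiv.coe_coe, g.symm_apply_apply]⟩
  · rintro ⟨⟨e⟩, hyC⟩
    refine ⟨⟨(g.symm.submoduleMap C).trans e⟩, ?_⟩
    obtain ⟨x, hx, hxy⟩ := Submodule.mem_map.1 hyC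
    have : x = y := by rw [← hg, ← hxy, LinearEquiv.coe_coe, g.apply_symm_apply]
    rwa [this] at hx

end BalancedAux

theorem free_codes_form_balanced_set
    (R : Type*) [Ring R] [Finite R] (n k : ℕ) (hn : 1 ≤ n) (hk1 : 1 ≤ k) (hkn : k ≤ n) :
    ∃ L : ℕ, ∀ y : Fin n → R, (∃ i, IsUnit (y i)) →
      Nat.card {C : Submodule R (Fin n → R) //
        Nonempty (C ≃ₗ[R] (Fin k → R)) ∧ y ∈ C} = L := by
  set i0 : Fin n := ⟨0, hn⟩
  set y₀ : Fin n → R := Pi.single i0 1 with hy₀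
  refine ⟨Nat.card {C : Submodule R (Fin n → R) //
      Nonempty (C ≃ₗ[R] (Fin k → R)) ∧ y₀ ∈ C}, ?_⟩
  rintro y ⟨j, hj⟩
  -- swap coordinates i0 and j, then shear
  set σ : (Fin n → R) ≃ₗ[R] (Fin n → R) := LinearEquiv.funCongrLeft R R (Equiv.swap i0 j)
  have hσ : σ y₀ = Pi.single j 1 := by
    funext i
    have : σ y₀ i = y₀ (Equiv.swap i0 j i) := rfl
    rw [this, hy₀]
    by_cases h : i = j
    · subst h
      rw [Equiv.swap_apply_right, Pi.single_eq_same, Pi.single_eq_same]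
    · have h2 : Equiv.swap i0 j i ≠ i0 := by
        intro he
        apply h
        have := congrArg (Equiv.swap i0 j) he
        rwa [Equiv.swap_apply_self, Equiv.swap_apply_left] at this
      rw [Pi.single_eq_of_ne h2, Pi.single_eq_of_ne h]
  set g : (Fin n → R) ≃ₗ[R] (Fin n → R) := σ.trans (BalancedAux.shearEquiv y j hj)
  have hg : g y₀ = y := by
    show BalancedAux.shearEquiv y j hj (σ y₀) = y
    rw [hσ, BalancedAux.shearEquiv_single]
  exact BalancedAux.card_eq k g y₀ y hg
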